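/- arXiv:2407.04860 — 3 statements merged into one kernel-verified Lean document; each statement's English description precedes it below -/
import Mathlib

section
/- Let ν be a σ-finite measure on (Ω,𝒜), P_1,…,P_K probability measures equivalent to ν with densities f_k = dP_k/dν, weights π_k ∈ [0,1] with Σ_k π_k = 1, Z := ∫ Π_k f_k^{π_k} dν ∈ (0,∞), and G the probability measure with dG/dν = Π_k f_k^{π_k}/Z. Then for every probability measure Q ≪ ν with KL(Q‖ν) < ∞ and log f_k ∈ L¹(Q) for all k, one has Σ_k π_k · KL(Q‖P_k) ≥ −log Z, with equality if and only if Q = G. In particular G is the unique minimiser of Q ↦ Σ_k π_k KL(Q‖P_k) over such Q, and the minimum value is −log Z. -/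
open MeasureTheory
open scoped ENNReal

/-- Kullback–Leibler divergence `KL(Q‖P) = ∫ log(dQ/dP) dQ`. -/
noncomputable def klDiv {Ω : Type*} [MeasurableSpace Ω] (Q P : Measure Ω) : ℝ :=
  ∫ ω, Real.log ((Q.rnDeriv P) ω).toReal ∂Q

lemma gibbs {Ω : Type*} [MeasurableSpace Ω] (Q G : Measure Ω)
    [IsProbabilityMeasure Q] [IsProbabilityMeasure G] (hQG : Q ≪ G)
    (hint : Integrable (fun ω => Real.log ((Q.rnDeriv G) ω).toReal) Q) :
    0 ≤ klDiv Q G ∧ (klDiv Q G = 0 ↔ Q = G) := by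
  set ρ : Ω → ℝ≥0∞ := Q.rnDeriv G with hρ
  have hρm : Measurable ρ := Q.measurable_rnDeriv G
  have hpos : ∀ᵐ ω ∂Q, 0 < ρ ω := Q.rnDeriv_pos hQG
  have hfin : ∀ᵐ ω ∂Q, ρ ω ≠ ∞ := hQG.ae_le (Q.rnDeriv_ne_top G)
  have hQeq : G.withDensity ρ = Q := Measure.withDensity_rnDeriv_eq Q G hQG
  -- the real-valued density and its inverse
  set r : Ω → ℝ := fun ω => (ρ ω).toReal with hr
  have hrpos : ∀ᵐ ω ∂Q, 0 < r ω := by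
    filter_upwards [hpos, hfin] with ω h1 h2 using ENNReal.toReal_pos h1.ne' h2
  -- pointwise inequality : 1 - r⁻¹ ≤ log r
  have hptwise : ∀ᵐ ω ∂Q, 1 - (r ω)⁻¹ ≤ Real.log (r ω) := by
    filter_upwards [hrpos] with ω h
    have := Real.log_le_sub_one_of_pos (inv_pos.mpr h)
    rw [Real.log_inv] at this; linarith
  -- lintegral bound
  have hmul_le : ∀ ω, ρ ω * (ρ ω)⁻¹ ≤ 1 := by
    intro ω
    rcases eq_or_ne (ρ ω) 0 with h | h
    · simp [h]
    rcases eq_or_ne (ρ ω) ∞ with h' | h'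
    · simp [h']
    · rw [ENNReal.mul_inv_cancel h h']
  have hlint_eq : ∫⁻ ω, (ρ ω)⁻¹ ∂Q = ∫⁻ ω, ρ ω * (ρ ω)⁻¹ ∂G := by
    conv_lhs => rw [← hQeq]
    rw [lintegral_withDensity_eq_lintegral_mul _ hρm (g := fun ω => (ρ ω)⁻¹) hρm.inv]
    rfl
  have hlint_le : ∫⁻ ω, (ρ ω)⁻¹ ∂Q ≤ 1 := by
    rw [hlint_eq]
    calc ∫⁻ ω, ρ ω * (ρ ω)⁻¹ ∂G ≤ ∫⁻ _, 1 ∂G := lintegral_mono hmul_le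
    _ = 1 := by simp
  -- ofReal of the real inverse equals the ennreal inverse a.e.
  have hofReal : ∀ᵐ ω ∂Q, ENNReal.ofReal ((r ω)⁻¹) = (ρ ω)⁻¹ := by
    filter_upwards [hpos, hfin] with ω h1 h2
    rw [hr, ← ENNReal.toReal_inv, ENNReal.ofReal_toReal (by simp [h2, h1.ne'])]
  have hrinv_meas : AEStronglyMeasurable (fun ω => (r ω)⁻¹) Q :=
    (hρm.ennreal_toReal.inv).aestronglyMeasurable
  have hrinv_nonneg : 0 ≤ᵐ[Q] fun ω => (r ω)⁻¹ := by
    filter_upwards [hrpos] with ω h using (inv_pos.mpr h).le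
  have hint_eq : ∫ ω, (r ω)⁻¹ ∂Q = (∫⁻ ω, (ρ ω)⁻¹ ∂Q).toReal := by
    rw [integral_eq_lintegral_of_nonneg_ae hrinv_nonneg hrinv_meas]
    congr 1
    exact lintegral_congr_ae hofReal
  have hrinv_int : Integrable (fun ω => (r ω)⁻¹) Q := by
    refine ⟨hrinv_meas, ?_⟩
    rw [hasFiniteIntegral_iff_norm]
    have : ∫⁻ ω, ENNReal.ofReal ‖(r ω)⁻¹‖ ∂Q = ∫⁻ ω, (ρ ω)⁻¹ ∂Q := by
      refine lintegral_congr_ae ?_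
      filter_upwards [hofReal, hrinv_nonneg] with ω h1 h2
      rw [Real.norm_of_nonneg h2, h1]
    rw [this]
    exact lt_of_le_of_lt hlint_le ENNReal.one_lt_top
  have hint_rinv_le : ∫ ω, (r ω)⁻¹ ∂Q ≤ 1 := by
    rw [hint_eq]
    exact ENNReal.toReal_le_of_le_ofReal zero_le_one (by simpa using hlint_le)
  have h1sub_int : Integrable (fun ω => 1 - (r ω)⁻¹) Q :=
    (integrable_const 1).sub hrinv_int
  have hklge : 1 - ∫ ω, (r ω)⁻¹ ∂Q ≤ klDiv Q G := by
    have := integral_mono_ae h1sub_int hint hptwise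
    rwa [integral_sub (integrable_const 1) hrinv_int, integral_const, probReal_univ,
      smul_eq_mul, one_mul] at this
  have hkl0 : 0 ≤ klDiv Q G := le_trans (by linarith) hklge
  refine ⟨hkl0, ?_, ?_⟩
  · -- klDiv = 0 → Q = G
    intro h0
    set φ : Ω → ℝ := fun ω => Real.log (r ω) - (1 - (r ω)⁻¹) with hφ
    have hφ_int : Integrable φ Q := hint.sub h1sub_int
    have hφ_nonneg : 0 ≤ᵐ[Q] φ := by
      filter_upwards [hptwise] with ω h using by simp [hφ]; linarith
    have hφ_integral : ∫ ω, φ ω ∂Q = (∫ ω, (r ω)⁻¹ ∂Q) - 1 := by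
      rw [hφ]
      rw [integral_sub hint h1sub_int,
        integral_sub (integrable_const 1) hrinv_int, integral_const, probReal_univ]
      have : ∫ ω, Real.log (r ω) ∂Q = klDiv Q G := rfl
      rw [this, h0]; simp
    have hφ_zero : ∫ ω, φ ω ∂Q = 0 :=
      le_antisymm (by rw [hφ_integral]; linarith) (integral_nonneg_of_ae hφ_nonneg)
    -- equality in the integral of r⁻¹
    have hrint1 : ∫ ω, (r ω)⁻¹ ∂Q = 1 := by rw [hφ_integral] at hφ_zero; linarith
    -- φ = 0 a.e.
    have hφ_ae : φ =ᵐ[Q] 0 :=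
      (integral_eq_zero_iff_of_nonneg_ae hφ_nonneg hφ_int).mp hφ_zero
    -- hence r = 1 a.e. Q, i.e. ρ = 1 a.e. Q
    have hρ1 : ∀ᵐ ω ∂Q, ρ ω = 1 := by
      filter_upwards [hφ_ae, hrpos, hpos, hfin] with ω hφω hrω hρω hfω
      have heq : Real.log (r ω) = 1 - (r ω)⁻¹ := by
        have : φ ω = 0 := hφω
        simp [hφ] at this; linarith
      by_contra hne
      have hr1 : r ω ≠ 1 := fun h => hne ((ENNReal.toReal_eq_one_iff _).mp h)
      have hinv1 : (r ω)⁻¹ ≠ 1 := by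
        intro h; exact hr1 (by field_simp at h; simp [h])
      have := Real.log_lt_sub_one_of_pos (inv_pos.mpr hrω) hinv1
      rw [Real.log_inv] at this; linarith
    -- G {ρ = 0} = 0
    have hlint1 : ∫⁻ ω, ρ ω * (ρ ω)⁻¹ ∂G = 1 := by
      rw [← hlint_eq]
      have : (∫⁻ ω, (ρ ω)⁻¹ ∂Q).toReal = 1 := by rw [← hint_eq]; exact hrint1
      have hne : ∫⁻ ω, (ρ ω)⁻¹ ∂Q ≠ ∞ := (lt_of_le_of_lt hlint_le ENNReal.one_lt_top).ne
      rw [← ENNReal.ofReal_toReal hne, this]; simp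
    have hmm : Measurable fun ω => ρ ω * (ρ ω)⁻¹ := hρm.mul hρm.inv
    have hsub0 : ∫⁻ ω, (1 - ρ ω * (ρ ω)⁻¹) ∂G = 0 := by
      rw [lintegral_sub hmm (by rw [hlint1]; exact ENNReal.one_ne_top)
        (Filter.Eventually.of_forall hmul_le), hlint1]
      simp
    have hae1 : ∀ᵐ ω ∂G, ρ ω * (ρ ω)⁻¹ = 1 := by
      have := (lintegral_eq_zero_iff ((measurable_const.sub hmm))).mp hsub0
      filter_upwards [this] with ω h
      have h' : 1 - ρ ω * (ρ ω)⁻¹ = 0 := h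
      exact le_antisymm (hmul_le ω) (tsub_eq_zero_iff_le.mp h')
    have hGρ0 : ∀ᵐ ω ∂G, ρ ω ≠ 0 := by
      filter_upwards [hae1] with ω h h0
      rw [h0] at h; simp at h
    -- ρ = 1 a.e. G
    have hQset : Q {ω | ρ ω ≠ 1} = 0 := hρ1
    have hGset : ∀ᵐ ω ∂G, ρ ω ≠ 1 → ρ ω = 0 := by
      have hms : MeasurableSet {ω | ρ ω ≠ 1} := (hρm (measurableSet_singleton 1)).compl
      rw [← hQeq, withDensity_apply _ hms] at hQset
      have := (setLIntegral_eq_zero_iff hms hρm).mp hQset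
      filter_upwards [this] with ω h hne using h hne
    have hGρ1 : ρ =ᵐ[G] 1 := by
      filter_upwards [hGρ0, hGset] with ω h0 h1
      by_contra hne
      exact h0 (h1 hne)
    calc Q = G.withDensity ρ := hQeq.symm
    _ = G.withDensity 1 := withDensity_congr_ae hGρ1
    _ = G := by simp
  · -- Q = G → klDiv = 0
    intro h
    subst h
    have : ∀ᵐ ω ∂Q, Real.log ((Q.rnDeriv Q) ω).toReal = 0 := by
      filter_upwards [Q.rnDeriv_self] with ω h
      rw [h]; simp
    rw [klDiv, integral_congr_ae this, integral_zero]

theorem stmt2 {Ω : Type*} [MeasurableSpace Ω] (ν : Measure Ω) [SigmaFinite ν]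
    (K : ℕ) (P : Fin K → Measure Ω) [∀ k, IsProbabilityMeasure (P k)]
    (f : Fin K → Ω → ℝ≥0∞) (hf : ∀ k, Measurable (f k))
    (hPf : ∀ k, P k = ν.withDensity (f k))
    (hequiv : ∀ k, P k ≪ ν ∧ ν ≪ P k)
    (π : Fin K → ℝ) (hπ : ∀ k, π k ∈ Set.Icc (0 : ℝ) 1) (hπsum : ∑ k, π k = 1)
    (Z : ℝ≥0∞) (hZ : Z = ∫⁻ ω, ∏ k, f k ω ^ π k ∂ν)
    (hZpos : 0 < Z) (hZfin : Z < ⊤)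
    (G : Measure Ω) [IsProbabilityMeasure G]
    (hG : G = ν.withDensity fun ω => (∏ k, f k ω ^ π k) / Z)
    (Q : Measure Ω) [IsProbabilityMeasure Q] (hQν : Q ≪ ν)
    (hKLfin : Integrable (fun ω => Real.log ((Q.rnDeriv ν) ω).toReal) Q)
    (hlogf : ∀ k, Integrable (fun ω => Real.log (f k ω).toReal) Q) :
    -Real.log Z.toReal ≤ ∑ k, π k * klDiv Q (P k) ∧
      (∑ k, π k * klDiv Q (P k) = -Real.log Z.toReal ↔ Q = G) := by
  -- positivity / finiteness of the densities, a.e. ν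
  have hf0 : ∀ k, ∀ᵐ ω ∂ν, f k ω ≠ 0 := by
    intro k
    have h1 : (P k).rnDeriv ν =ᵐ[ν] f k := by
      rw [hPf k]; exact Measure.rnDeriv_withDensity ν (hf k)
    have h2 : ∀ᵐ ω ∂ν, 0 < (P k).rnDeriv ν ω := Measure.rnDeriv_pos' (hequiv k).2
    filter_upwards [h1, h2] with ω hω h2ω
    rw [← hω]; exact h2ω.ne'
  have hftop : ∀ k, ∀ᵐ ω ∂ν, f k ω ≠ ∞ := by
    intro k
    have h1 : (P k).rnDeriv ν =ᵐ[ν] f k := by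
      rw [hPf k]; exact Measure.rnDeriv_withDensity ν (hf k)
    filter_upwards [h1, Measure.rnDeriv_ne_top (P k) ν] with ω hω h2ω
    rw [← hω]; exact h2ω
  -- the geometric mean density
  set g : Ω → ℝ≥0∞ := fun ω => ∏ k, f k ω ^ π k with hg
  have hgm : Measurable g := Finset.measurable_prod _ fun k _ => (hf k).pow_const _
  have hfae : ∀ᵐ ω ∂ν, ∀ k, f k ω ≠ 0 ∧ f k ω ≠ ∞ := by
    rw [MeasureTheory.ae_all_iff]
    intro k
    filter_upwards [hf0 k, hftop k] with ω h1 h2 using ⟨h1, h2⟩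
  have hgae : ∀ᵐ ω ∂ν, g ω ≠ 0 ∧ g ω ≠ ∞ := by
    filter_upwards [hfae] with ω hω
    constructor
    · rw [hg]
      rw [Finset.prod_ne_zero_iff]
      intro k _
      exact (ENNReal.rpow_pos (pos_iff_ne_zero.mpr (hω k).1) (hω k).2).ne'
    · rw [hg]
      refine (ENNReal.prod_lt_top fun k _ => ?_).ne
      exact (ENNReal.rpow_lt_top_of_nonneg (hπ k).1 (hω k).2)
  -- Q ≪ G
  have hνG : ν ≪ G := by
    rw [hG]
    refine withDensity_absolutelyContinuous' (hgm.div_const Z).aemeasurable ?_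
    filter_upwards [hgae] with ω hω
    intro h
    rcases ENNReal.div_eq_zero_iff.mp h with h' | h'
    · exact hω.1 h'
    · exact hZfin.ne h'
  have hQG : Q ≪ G := hQν.trans hνG
  -- Radon–Nikodym derivative computations
  set d : Ω → ℝ≥0∞ := Q.rnDeriv ν with hd
  have hdpos : ∀ᵐ ω ∂Q, 0 < d ω := Q.rnDeriv_pos hQν
  have hdtop : ∀ᵐ ω ∂Q, d ω ≠ ∞ := hQν.ae_le (Q.rnDeriv_ne_top ν)
  have hρk : ∀ k, Q.rnDeriv (P k) =ᵐ[ν] fun ω => (f k ω)⁻¹ * d ω := by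
    intro k
    rw [hPf k]
    exact Measure.rnDeriv_withDensity_right Q ν (hf k).aemeasurable (hf0 k) (hftop k)
  have hρG : Q.rnDeriv G =ᵐ[ν] fun ω => (g ω / Z)⁻¹ * d ω := by
    rw [hG]
    refine Measure.rnDeriv_withDensity_right Q ν (hgm.div_const Z).aemeasurable ?_ ?_
    · filter_upwards [hgae] with ω hω
      intro h
      rcases ENNReal.div_eq_zero_iff.mp h with h' | h'
      · exact hω.1 h'
      · exact hZfin.ne h'
    · filter_upwards [hgae] with ω hω
      simp [ENNReal.div_eq_top, hω.2, hZpos.ne']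
      exact fun h => absurd h hω.2
  -- pointwise log identities a.e. Q
  have hlogk : ∀ k, ∀ᵐ ω ∂Q, Real.log ((Q.rnDeriv (P k)) ω).toReal
      = Real.log (d ω).toReal - Real.log (f k ω).toReal := by
    intro k
    filter_upwards [hQν.ae_le (hρk k), hQν.ae_le (hf0 k), hQν.ae_le (hftop k),
      hdpos, hdtop] with ω he h0 htop hdp hdt
    simp only [he]
    rw [ENNReal.toReal_mul, ENNReal.toReal_inv,
      Real.log_mul (inv_ne_zero (ENNReal.toReal_pos h0 htop).ne')
        (ENNReal.toReal_pos hdp.ne' hdt).ne', Real.log_inv]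
    ring
  have hlogg : ∀ᵐ ω ∂Q, Real.log (g ω).toReal = ∑ k, π k * Real.log (f k ω).toReal := by
    filter_upwards [hQν.ae_le hfae] with ω hω
    have h1 : ∀ k ∈ Finset.univ, ((f k ω) ^ π k).toReal = (f k ω).toReal ^ π k :=
      fun k _ => (ENNReal.toReal_rpow _ _).symm
    simp only [hg]
    rw [ENNReal.toReal_prod, Finset.prod_congr rfl h1,
      Real.log_prod (fun k _ =>
        (Real.rpow_pos_of_pos (ENNReal.toReal_pos (hω k).1 (hω k).2) _).ne')]
    exact Finset.sum_congr rfl fun k _ =>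
      Real.log_rpow (ENNReal.toReal_pos (hω k).1 (hω k).2) _
  have hlogG : ∀ᵐ ω ∂Q, Real.log ((Q.rnDeriv G) ω).toReal
      = Real.log (d ω).toReal - ∑ k, π k * Real.log (f k ω).toReal + Real.log Z.toReal := by
    filter_upwards [hQν.ae_le hρG, hQν.ae_le hgae, hdpos, hdtop, hlogg]
      with ω he hgω hdp hdt hlg
    have hgt : (g ω).toReal ≠ 0 := (ENNReal.toReal_pos hgω.1 hgω.2).ne'
    have hZt : Z.toReal ≠ 0 := (ENNReal.toReal_pos hZpos.ne' hZfin.ne).ne'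
    simp only [he]
    rw [ENNReal.toReal_mul, ENNReal.toReal_inv, ENNReal.toReal_div,
      Real.log_mul (inv_ne_zero (div_ne_zero hgt hZt))
        (ENNReal.toReal_pos hdp.ne' hdt).ne', Real.log_inv,
      Real.log_div hgt hZt, hlg]
    ring
  -- integral identities
  have hsum_int : Integrable (fun ω => ∑ k, π k * Real.log (f k ω).toReal) Q :=
    integrable_finset_sum _ fun k _ => (hlogf k).const_mul (π k)
  have hkl_k : ∀ k, klDiv Q (P k) = klDiv Q ν - ∫ ω, Real.log (f k ω).toReal ∂Q := by
    intro k
    rw [klDiv, integral_congr_ae (hlogk k), integral_sub hKLfin (hlogf k)]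
    rfl
  have hsum : ∑ k, π k * klDiv Q (P k)
      = klDiv Q ν - ∑ k, π k * ∫ ω, Real.log (f k ω).toReal ∂Q := by
    simp_rw [hkl_k, mul_sub]
    rw [Finset.sum_sub_distrib, ← Finset.sum_mul, hπsum, one_mul]
  have hintG : Integrable (fun ω => Real.log ((Q.rnDeriv G) ω).toReal) Q := by
    refine Integrable.congr
      (((hKLfin.sub hsum_int).add (integrable_const _)) :
        Integrable (fun ω => Real.log (d ω).toReal
          - ∑ k, π k * Real.log (f k ω).toReal + Real.log Z.toReal) Q) ?_
    filter_upwards [hlogG] with ω h using h.symm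
  have hklG : klDiv Q G
      = klDiv Q ν - ∑ k, π k * ∫ ω, Real.log (f k ω).toReal ∂Q + Real.log Z.toReal := by
    have h2 : Integrable (fun ω => Real.log (d ω).toReal
        - ∑ k, π k * Real.log (f k ω).toReal) Q := hKLfin.sub hsum_int
    rw [klDiv, integral_congr_ae hlogG, integral_add h2 (integrable_const _),
      integral_sub hKLfin hsum_int, integral_const, probReal_univ,
      one_smul, integral_finset_sum _ fun k _ => (hlogf k).const_mul (π k)]
    simp_rw [integral_const_mul]
    rfl
  have hkey : ∑ k, π k * klDiv Q (P k) = klDiv Q G - Real.log Z.toReal := by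
    rw [hsum, hklG]; ring
  obtain ⟨h1, h2⟩ := gibbs Q G hQG hintG
  constructor
  · rw [hkey]; linarith
  · rw [hkey]
    constructor
    · intro h; exact h2.mp (by linarith)
    · intro h; rw [h2.mpr h]; ring
end

section
/- Let G be a probability measure on (Ω,𝒜), n ∈ ℕ, F : Ω → ℝⁿ bounded measurable, and η* ∈ ℝⁿ. Let Q* be the probability measure with dQ*/dG = e^{−⟨η*,F⟩}/∫ e^{−⟨η*,F⟩} dG, and assume ∫ F dQ* = 0. Then for every probability measure Q ≪ G with KL(Q‖G) < ∞ and ∫ F dQ = 0, one has the Pythagorean identity KL(Q‖G) = KL(Q‖Q*) + KL(Q*‖G). In particular KL(Q‖G) ≥ KL(Q*‖G), with equality if and only if Q = Q*, so Q* is the unique minimiser of KL(·‖G) over measures satisfying the linear constraint ∫ F dQ = 0. -/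
open MeasureTheory
open scoped ENNReal

/-- Gibbs' inequality with equality case. -/
lemma gibbs_aux {Ω : Type*} [MeasurableSpace Ω] (Q P : Measure Ω)
    [IsProbabilityMeasure Q] [IsProbabilityMeasure P] (hQP : Q ≪ P)
    (hint : Integrable (llr Q P) Q) :
    0 ≤ ∫ x, llr Q P x ∂Q ∧ (∫ x, llr Q P x ∂Q = 0 → Q = P) := by
  have hd_eq : (fun x => Real.exp (-llr Q P x)) =ᵐ[Q] fun x => (P.rnDeriv Q x).toReal :=
    exp_neg_llr hQP
  have hd_int : Integrable (fun x => (P.rnDeriv Q x).toReal) Q :=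
    Measure.integrable_toReal_rnDeriv
  have hint_exp : Integrable (fun x => Real.exp (-llr Q P x)) Q := hd_int.congr hd_eq.symm
  have hd_val : ∫ x, (P.rnDeriv Q x).toReal ∂Q
      = 1 - (P.singularPart Q Set.univ).toReal := by
    rw [Measure.integral_toReal_rnDeriv']; simp; rfl
  have h_nonneg : ∀ x, 0 ≤ Real.exp (-llr Q P x) - 1 + llr Q P x := fun x => by
    have := Real.add_one_le_exp (-llr Q P x); linarith
  have h_int_h : Integrable (fun x => Real.exp (-llr Q P x) - 1 + llr Q P x) Q :=
    (hint_exp.sub (integrable_const 1)).add hint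
  have h_integral : ∫ x, (Real.exp (-llr Q P x) - 1 + llr Q P x) ∂Q
      = (1 - (P.singularPart Q Set.univ).toReal) - 1 + ∫ x, llr Q P x ∂Q := by
    have hi1 : Integrable (fun x => Real.exp (-llr Q P x) - 1) Q :=
      hint_exp.sub (integrable_const 1)
    rw [integral_add hi1 hint, integral_sub hint_exp (integrable_const 1),
      integral_congr_ae hd_eq, hd_val]
    simp
  have h_ge : 0 ≤ ∫ x, (Real.exp (-llr Q P x) - 1 + llr Q P x) ∂Q :=
    integral_nonneg h_nonneg
  have hsing_nonneg : 0 ≤ (P.singularPart Q Set.univ).toReal := ENNReal.toReal_nonneg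
  have h_ge2 : 0 ≤ (1 - (P.singularPart Q Set.univ).toReal) - 1 + ∫ x, llr Q P x ∂Q :=
    h_integral ▸ h_ge
  constructor
  · linarith
  · intro hzero
    have hsing0 : (P.singularPart Q Set.univ).toReal = 0 := by linarith
    have hsing : P.singularPart Q = 0 := by
      rw [← Measure.measure_univ_eq_zero]
      exact (ENNReal.toReal_eq_zero_iff _).mp hsing0 |>.resolve_right (measure_ne_top _ _)
    have hint0 : ∫ x, (Real.exp (-llr Q P x) - 1 + llr Q P x) ∂Q = 0 := by
      rw [h_integral, hzero, hsing0]; ring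
    have hae : (fun x => Real.exp (-llr Q P x) - 1 + llr Q P x) =ᵐ[Q] 0 :=
      (integral_eq_zero_iff_of_nonneg h_nonneg h_int_h).mp hint0
    have hllr0 : ∀ᵐ x ∂Q, llr Q P x = 0 := by
      filter_upwards [hae] with x hx
      simp only [Pi.zero_apply] at hx
      by_contra hne
      have h0 : (-llr Q P x) ≠ 0 := by simpa using hne
      have := Real.add_one_lt_exp h0
      linarith
    have hd1 : P.rnDeriv Q =ᵐ[Q] 1 := by
      filter_upwards [hllr0, hd_eq, Measure.rnDeriv_lt_top P Q] with x hx hdx hlt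
      have : (P.rnDeriv Q x).toReal = 1 := by
        rw [← hdx, hx, neg_zero, Real.exp_zero]
      rw [← ENNReal.ofReal_toReal hlt.ne, this]
      simp
    have hP : P = Q := by
      conv_lhs => rw [Measure.haveLebesgueDecomposition_add P Q]
      rw [hsing, zero_add, withDensity_congr_ae hd1, withDensity_one]
    exact hP.symm

theorem stmt9 {Ω : Type*} [MeasurableSpace Ω] (G : Measure Ω) [IsProbabilityMeasure G]
    (n : ℕ) (F : Ω → Fin n → ℝ) (hF : Measurable F)
    (C : ℝ) (hFbd : ∀ ω i, |F ω i| ≤ C)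
    (ηstar : Fin n → ℝ)
    (Qstar : Measure Ω) [IsProbabilityMeasure Qstar]
    (hQstar : Qstar = G.withDensity fun ω =>
      ENNReal.ofReal (Real.exp (-∑ i, ηstar i * F ω i)) /
        ∫⁻ ω', ENNReal.ofReal (Real.exp (-∑ i, ηstar i * F ω' i)) ∂G)
    (hbind : ∀ i, ∫ ω, F ω i ∂Qstar = 0)
    (Q : Measure Ω) [IsProbabilityMeasure Q] (hQG : Q ≪ G)
    (hKLfin : Integrable (fun ω => Real.log ((Q.rnDeriv G) ω).toReal) Q)
    (hQcon : ∀ i, ∫ ω, F ω i ∂Q = 0) :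
    klDiv Q G = klDiv Q Qstar + klDiv Qstar G ∧
      klDiv Qstar G ≤ klDiv Q G ∧
      (klDiv Q G = klDiv Qstar G ↔ Q = Qstar) := by
  classical
  set f : Ω → ℝ := fun ω => -∑ i, ηstar i * F ω i with hf_def
  have hf_meas : Measurable f := by
    apply Measurable.neg
    exact Finset.measurable_sum _ fun i _ => ((measurable_pi_apply i).comp hF).const_mul _
  set B : ℝ := ∑ i : Fin n, |ηstar i| * C with hB_def
  have hfb : ∀ ω, |f ω| ≤ B := fun ω => by
    rw [hf_def]
    simp only [abs_neg]
    refine (Finset.abs_sum_le_sum_abs _ _).trans (Finset.sum_le_sum fun i _ => ?_)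
    rw [abs_mul]
    exact mul_le_mul_of_nonneg_left (hFbd ω i) (abs_nonneg _)
  have hf_int : ∀ (μ : Measure Ω) [IsFiniteMeasure μ], Integrable f μ := fun μ _ =>
    ⟨hf_meas.aestronglyMeasurable,
      HasFiniteIntegral.of_bounded (C := B) (Filter.Eventually.of_forall fun ω => by
        rw [Real.norm_eq_abs]; exact hfb ω)⟩
  have hexpG : Integrable (fun ω => Real.exp (f ω)) G :=
    ⟨(Real.measurable_exp.comp hf_meas).aestronglyMeasurable,
      HasFiniteIntegral.of_bounded (C := Real.exp B) (Filter.Eventually.of_forall fun ω => by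
        rw [Real.norm_eq_abs, Real.abs_exp]
        exact Real.exp_le_exp.mpr ((le_abs_self _).trans (hfb ω)))⟩
  have hZpos : 0 < ∫ ω, Real.exp (f ω) ∂G := integral_exp_pos hexpG
  -- Qstar is the tilted measure
  have hQeq : Qstar = G.tilted f := by
    rw [hQstar, Measure.tilted]
    congr 1
    funext ω
    rw [← ofReal_integral_eq_lintegral_ofReal hexpG
        (Filter.Eventually.of_forall fun ω' => (Real.exp_pos _).le),
      ← ENNReal.ofReal_div_of_pos hZpos]
  have hQstarG : Qstar ≪ G := hQstar ▸ withDensity_absolutelyContinuous _ _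
  have hGQstar : G ≪ Qstar := hQeq ▸ absolutelyContinuous_tilted hexpG
  have hQQstar : Q ≪ Qstar := hQG.trans hGQstar
  -- integrals of F terms vanish
  have hFi_int : ∀ (μ : Measure Ω) [IsFiniteMeasure μ] (i : Fin n),
      Integrable (fun ω => ηstar i * F ω i) μ := fun μ _ i =>
    ⟨(((measurable_pi_apply i).comp hF).const_mul _).aestronglyMeasurable,
      HasFiniteIntegral.of_bounded (C := |ηstar i| * C) (Filter.Eventually.of_forall fun ω => by
        rw [Real.norm_eq_abs, abs_mul]
        exact mul_le_mul_of_nonneg_left (hFbd ω i) (abs_nonneg _))⟩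
  have hfint_zero : ∀ (μ : Measure Ω) [IsFiniteMeasure μ],
      (∀ i, ∫ ω, F ω i ∂μ = 0) → ∫ ω, f ω ∂μ = 0 := by
    intro μ _ hcon
    rw [hf_def]
    rw [integral_neg, integral_finset_sum _ fun i _ => hFi_int μ i]
    simp only [integral_const_mul]
    simp [hcon]
  have hfQstar0 : ∫ ω, f ω ∂Qstar = 0 := hfint_zero Qstar hbind
  have hfQ0 : ∫ ω, f ω ∂Q = 0 := hfint_zero Q hQcon
  set Z : ℝ := ∫ ω, Real.exp (f ω) ∂G with hZ_def
  -- klDiv Qstar G = - log Z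
  have hkl_star : klDiv Qstar G = - Real.log Z := by
    have h0 := log_rnDeriv_tilted_left_self (μ := G) (f := f) hexpG
    rw [← hQeq] at h0
    have h1 : (fun x => Real.log ((Qstar.rnDeriv G) x).toReal)
        =ᵐ[Qstar] fun x => f x - Real.log Z := hQstarG.ae_le h0
    rw [klDiv, integral_congr_ae h1, integral_sub (hf_int Qstar) (integrable_const _),
      hfQstar0, integral_const]
    simp
  -- klDiv Q Qstar = klDiv Q G + log Z
  have hKLfin' : Integrable (llr Q G) Q := hKLfin
  have hllr_eq : klDiv Q Qstar = klDiv Q G + Real.log Z := by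
    have h2 : klDiv Q Qstar = ∫ x, llr Q (G.tilted f) x ∂Q := by rw [hQeq]; rfl
    have h3 : klDiv Q G = ∫ x, llr Q G x ∂Q := rfl
    rw [h2, h3, integral_llr_tilted_right hQG (hf_int Q) hexpG hKLfin', hfQ0, ← hZ_def]
    ring
  have hpyth : klDiv Q G = klDiv Q Qstar + klDiv Qstar G := by
    rw [hllr_eq, hkl_star]; ring
  -- Gibbs for Q vs Qstar
  have hint_llr : Integrable (llr Q Qstar) Q := by
    rw [hQeq]
    exact integrable_llr_tilted_right hQG (hf_int Q) hKLfin' hexpG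
  obtain ⟨hge, heq⟩ := gibbs_aux Q Qstar hQQstar hint_llr
  have hkl_QQstar : klDiv Q Qstar = ∫ x, llr Q Qstar x ∂Q := rfl
  refine ⟨hpyth, by rw [hpyth]; linarith [hkl_QQstar ▸ hge], ?_, ?_⟩
  · intro h
    apply heq
    rw [← hkl_QQstar]
    linarith [hpyth, h]
  · intro h
    rw [h]
end

section
/- Let ν be a σ-finite measure, P_1,…,P_K probability measures equivalent to ν with densities f_k = dP_k/dν, weights π_k ∈ [0,1] with Σ_k π_k = 1, Z := ∫ Π_k f_k^{π_k} dν ∈ (0,∞), and G the probability measure with dG/dν = Π_k f_k^{π_k}/Z. Let S be any set of probability measures Q with Q ≪ ν, KL(Q‖ν) < ∞, and log f_k ∈ L¹(Q) for all k. Then Q_0 ∈ S minimises Q ↦ Σ_k π_k KL(Q‖P_k) over S if and only if Q_0 minimises Q ↦ KL(Q‖G) over S. -/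
open MeasureTheory
open scoped ENNReal

/-- Log of the Radon–Nikodym derivative wrt a `withDensity` measure splits as a difference. -/
lemma log_rnDeriv_ae {Ω : Type*} [MeasurableSpace Ω] (ν Q T : Measure Ω)
    [SigmaFinite ν] [SigmaFinite Q] [SigmaFinite T]
    (h : Ω → ℝ≥0∞) (hh : Measurable h) (hT : T = ν.withDensity h)
    (hQν : Q ≪ ν) (hνT : ν ≪ T) :
    (fun ω => Real.log ((Q.rnDeriv T) ω).toReal)
      =ᵐ[Q] fun ω => Real.log ((Q.rnDeriv ν) ω).toReal - Real.log (h ω).toReal := by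
  have hTν : T ≪ ν := hT ▸ withDensity_absolutelyContinuous ν h
  have h1 : T.rnDeriv ν =ᵐ[ν] h := hT ▸ Measure.rnDeriv_withDensity ν hh
  have hposν : ∀ᵐ ω ∂ν, 0 < h ω := by
    filter_upwards [h1, hνT.ae_le (Measure.rnDeriv_pos hTν)] with ω h1 h2
    rwa [h1] at h2
  have hfinν : ∀ᵐ ω ∂ν, h ω < ∞ := by
    filter_upwards [h1, Measure.rnDeriv_lt_top T ν] with ω h1 h2
    rwa [h1] at h2
  have hkey : Q.rnDeriv ν * ν.rnDeriv T =ᵐ[ν] Q.rnDeriv T :=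
    Measure.rnDeriv_mul_rnDeriv' hνT
  have hinv : (T.rnDeriv ν)⁻¹ =ᵐ[T] ν.rnDeriv T := Measure.inv_rnDeriv hTν
  filter_upwards [hQν.ae_le hkey, hQν.ae_le (hνT.ae_le hinv), hQν.ae_le h1,
    Measure.rnDeriv_pos hQν, hQν.ae_le (Measure.rnDeriv_lt_top Q ν),
    hQν.ae_le hposν, hQν.ae_le hfinν] with ω hk hi hh1 hqpos hqfin hpos hfin
  have hxpos : 0 < ((Q.rnDeriv ν) ω).toReal := ENNReal.toReal_pos hqpos.ne' hqfin.ne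
  have hypos : 0 < (h ω).toReal := ENNReal.toReal_pos hpos.ne' hfin.ne
  have : (Q.rnDeriv T) ω = (Q.rnDeriv ν) ω * (h ω)⁻¹ := by
    rw [← hk]
    simp only [Pi.mul_apply]
    rw [← hi]
    simp [hh1]
  rw [this, ENNReal.toReal_mul, ENNReal.toReal_inv, ← div_eq_mul_inv,
    Real.log_div hxpos.ne' hypos.ne']

theorem stmt10 {Ω : Type*} [MeasurableSpace Ω] (ν : Measure Ω) [SigmaFinite ν]
    (K : ℕ) (P : Fin K → Measure Ω) [∀ k, IsProbabilityMeasure (P k)]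
    (f : Fin K → Ω → ℝ≥0∞) (hf : ∀ k, Measurable (f k))
    (hPf : ∀ k, P k = ν.withDensity (f k))
    (hequiv : ∀ k, P k ≪ ν ∧ ν ≪ P k)
    (π : Fin K → ℝ) (hπ : ∀ k, π k ∈ Set.Icc (0 : ℝ) 1) (hπsum : ∑ k, π k = 1)
    (Z : ℝ≥0∞) (hZ : Z = ∫⁻ ω, ∏ k, f k ω ^ π k ∂ν)
    (hZpos : 0 < Z) (hZfin : Z < ⊤)
    (G : Measure Ω) [IsProbabilityMeasure G]
    (hG : G = ν.withDensity fun ω => (∏ k, f k ω ^ π k) / Z)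
    (S : Set (Measure Ω))
    (hS : ∀ Q ∈ S, IsProbabilityMeasure Q ∧ Q ≪ ν ∧
      Integrable (fun ω => Real.log ((Q.rnDeriv ν) ω).toReal) Q ∧
      ∀ k, Integrable (fun ω => Real.log (f k ω).toReal) Q)
    (Q₀ : Measure Ω) (hQ₀ : Q₀ ∈ S) :
    (∀ Q ∈ S, ∑ k, π k * klDiv Q₀ (P k) ≤ ∑ k, π k * klDiv Q (P k)) ↔
      ∀ Q ∈ S, klDiv Q₀ G ≤ klDiv Q G := by
  -- the geometric density
  set g : Ω → ℝ≥0∞ := fun ω => (∏ k, f k ω ^ π k) / Z with hg_def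
  have hg_meas : Measurable g := by
    apply Measurable.div _ measurable_const
    exact Finset.measurable_prod _ fun k _ => (hf k).pow measurable_const
  -- positivity and finiteness of the densities f k, a.e. ν
  have hfpos : ∀ k, ∀ᵐ ω ∂ν, 0 < f k ω := by
    intro k
    have h1 : (P k).rnDeriv ν =ᵐ[ν] f k := (hPf k) ▸ Measure.rnDeriv_withDensity ν (hf k)
    filter_upwards [h1, (hequiv k).2.ae_le (Measure.rnDeriv_pos (hequiv k).1)] with ω h1 h2
    rwa [h1] at h2
  have hffin : ∀ k, ∀ᵐ ω ∂ν, f k ω < ∞ := by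
    intro k
    have h1 : (P k).rnDeriv ν =ᵐ[ν] f k := (hPf k) ▸ Measure.rnDeriv_withDensity ν (hf k)
    filter_upwards [h1, Measure.rnDeriv_lt_top (P k) ν] with ω h1 h2
    rwa [h1] at h2
  -- g is positive a.e. ν, so ν ≪ G
  have hgpos : ∀ᵐ ω ∂ν, 0 < g ω := by
    have hall : ∀ᵐ ω ∂ν, ∀ k, 0 < f k ω := (MeasureTheory.ae_all_iff).2 hfpos
    have hallf : ∀ᵐ ω ∂ν, ∀ k, f k ω < ∞ := (MeasureTheory.ae_all_iff).2 hffin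
    filter_upwards [hall, hallf] with ω hω hωf
    refine ENNReal.div_pos ?_ hZfin.ne
    rw [← pos_iff_ne_zero]
    exact CanonicallyOrderedAdd.prod_pos.2
      fun k _ => ENNReal.rpow_pos (hω k) (hωf k).ne
  have hνG : ν ≪ G := by
    rw [hG]
    exact withDensity_absolutelyContinuous' hg_meas.aemeasurable
      (by filter_upwards [hgpos] with ω hω using hω.ne')
  -- a.e. ν expression for log g
  have hlogg : (fun ω => Real.log (g ω).toReal)
      =ᵐ[ν] fun ω => (∑ k, π k * Real.log (f k ω).toReal) - Real.log Z.toReal := by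
    have hallp : ∀ᵐ ω ∂ν, ∀ k, 0 < f k ω := (MeasureTheory.ae_all_iff).2 hfpos
    have hallf : ∀ᵐ ω ∂ν, ∀ k, f k ω < ∞ := (MeasureTheory.ae_all_iff).2 hffin
    filter_upwards [hallp, hallf] with ω hp hfin
    have hx : ∀ k, 0 < (f k ω).toReal := fun k => ENNReal.toReal_pos (hp k).ne' (hfin k).ne
    have hZr : 0 < Z.toReal := ENNReal.toReal_pos hZpos.ne' hZfin.ne
    have hprod : (∏ k, f k ω ^ π k).toReal = ∏ k, (f k ω).toReal ^ π k := by
      rw [ENNReal.toReal_prod]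
      exact Finset.prod_congr rfl fun k _ => (ENNReal.toReal_rpow _ _).symm
    have hprodpos : 0 < ∏ k, (f k ω).toReal ^ π k :=
      Finset.prod_pos fun k _ => Real.rpow_pos_of_pos (hx k) _
    rw [hg_def]
    simp only
    rw [ENNReal.toReal_div, hprod, Real.log_div hprodpos.ne' hZr.ne',
      Real.log_prod (fun k _ => (Real.rpow_pos_of_pos (hx k) _).ne')]
    congr 1
    exact Finset.sum_congr rfl fun k _ => Real.log_rpow (hx k) _
  -- the key identity
  have key : ∀ Q ∈ S, ∑ k, π k * klDiv Q (P k) = klDiv Q G - Real.log Z.toReal := by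
    intro Q hQS
    obtain ⟨hQprob, hQν, hintA, hintf⟩ := hS Q hQS
    haveI := hQprob
    set A : ℝ := ∫ ω, Real.log ((Q.rnDeriv ν) ω).toReal ∂Q with hA
    have hKLP : ∀ k, klDiv Q (P k) = A - ∫ ω, Real.log (f k ω).toReal ∂Q := by
      intro k
      rw [klDiv, integral_congr_ae
        (log_rnDeriv_ae ν Q (P k) (f k) (hf k) (hPf k) hQν (hequiv k).2)]
      exact integral_sub hintA (hintf k)
    have hintsum : Integrable (fun ω => ∑ k, π k * Real.log (f k ω).toReal) Q :=
      integrable_finset_sum _ fun k _ => (hintf k).const_mul _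
    have hKLG : klDiv Q G = A - ((∑ k, π k * ∫ ω, Real.log (f k ω).toReal ∂Q)
        - Real.log Z.toReal) := by
      rw [klDiv, integral_congr_ae (log_rnDeriv_ae ν Q G g hg_meas hG hQν hνG)]
      have : (fun ω => Real.log ((Q.rnDeriv ν) ω).toReal - Real.log (g ω).toReal)
          =ᵐ[Q] fun ω => Real.log ((Q.rnDeriv ν) ω).toReal
            - ((∑ k, π k * Real.log (f k ω).toReal) - Real.log Z.toReal) := by
        filter_upwards [hQν.ae_le hlogg] with ω hω
        rw [hω]
      rw [integral_congr_ae this]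
      have h2 : Integrable (fun ω => (∑ k, π k * Real.log (f k ω).toReal)
          - Real.log Z.toReal) Q := hintsum.sub (integrable_const _)
      rw [integral_sub hintA h2, integral_sub hintsum (integrable_const _),
        integral_finset_sum _ (fun k _ => (hintf k).const_mul _), integral_const]
      simp only [measure_univ, probReal_univ, ENNReal.toReal_one, smul_eq_mul, one_mul]
      congr 2
      exact Finset.sum_congr rfl fun k _ => integral_const_mul _ _
    calc ∑ k, π k * klDiv Q (P k)
        = ∑ k, (π k * A - π k * ∫ ω, Real.log (f k ω).toReal ∂Q) := by
          refine Finset.sum_congr rfl fun k _ => ?_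
          rw [hKLP k, mul_sub]
      _ = (∑ k, π k) * A - ∑ k, π k * ∫ ω, Real.log (f k ω).toReal ∂Q := by
          rw [Finset.sum_sub_distrib, Finset.sum_mul]
      _ = klDiv Q G - Real.log Z.toReal := by rw [hπsum, hKLG]; ring
  constructor
  · intro H Q hQS
    have h1 := H Q hQS
    rw [key Q₀ hQ₀, key Q hQS] at h1
    linarith
  · intro H Q hQS
    have h1 := H Q hQS
    rw [key Q₀ hQ₀, key Q hQS]
    linarith
end
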